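/- Let p₁, …, p_r be distinct odd primes, e₁, …, e_r ≥ 1 integers, and N = p₁^{e₁}·…·p_r^{e_r}. Let D ∈ ℤ/Nℤ be such that its reduction modulo p_i is a non-square in ℤ/p_iℤ for every i = 1, …, r. Then for every (x,y) ∈ H_{D,ℤ/Nℤ}, the Ψ(N)-th ⊗-power of (x,y) equals (1,0), where Ψ(N) = p₁^{e₁−1}(p₁ + 1)·…·p_r^{e_r−1}(p_r + 1). -/

import Mathlib

/-- The Brahmagupta (Pell) product on `R × R`. -/
def pellMul {R : Type*} [CommRing R] (D : R) (P Q : R × R) : R × R :=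
  (P.1 * Q.1 + D * P.2 * Q.2, P.2 * Q.1 + P.1 * Q.2)

/-- `n`-th power with respect to the Brahmagupta product (identity `(1,0)`). -/
def pellPow {R : Type*} [CommRing R] (D : R) (P : R × R) : ℕ → R × R
  | 0 => (1, 0)
  | n + 1 => pellMul D P (pellPow D P n)

/-- The Pell conic `H_{D,R} = {(x, y) : x² − D y² = 1}`. -/
def pellConic {R : Type*} [CommRing R] (D : R) : Set (R × R) :=
  {P | P.1 ^ 2 - D * P.2 ^ 2 = 1}

/-- Auxiliary quadratic extension `R[√D]` as a structure. -/
@[ext] structure PellE (R : Type*) [CommRing R] (D : R) where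
  x : R
  y : R

namespace PellE

variable {R : Type*} [CommRing R] {D : R}

instance : Add (PellE R D) := ⟨fun a b => ⟨a.x + b.x, a.y + b.y⟩⟩
instance : Mul (PellE R D) := ⟨fun a b => ⟨a.x * b.x + D * a.y * b.y, a.y * b.x + a.x * b.y⟩⟩
instance : Neg (PellE R D) := ⟨fun a => ⟨-a.x, -a.y⟩⟩
instance : Zero (PellE R D) := ⟨⟨0, 0⟩⟩
instance : One (PellE R D) := ⟨⟨1, 0⟩⟩
instance : NatCast (PellE R D) := ⟨fun n => ⟨n, 0⟩⟩
instance : IntCast (PellE R D) := ⟨fun n => ⟨n, 0⟩⟩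

@[simp] lemma add_x (a b : PellE R D) : (a + b).x = a.x + b.x := rfl
@[simp] lemma add_y (a b : PellE R D) : (a + b).y = a.y + b.y := rfl
@[simp] lemma mul_x (a b : PellE R D) : (a * b).x = a.x * b.x + D * a.y * b.y := rfl
@[simp] lemma mul_y (a b : PellE R D) : (a * b).y = a.y * b.x + a.x * b.y := rfl
@[simp] lemma neg_x (a : PellE R D) : (-a).x = -a.x := rfl
@[simp] lemma neg_y (a : PellE R D) : (-a).y = -a.y := rfl
@[simp] lemma zero_x : (0 : PellE R D).x = 0 := rfl
@[simp] lemma zero_y : (0 : PellE R D).y = 0 := rfl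
@[simp] lemma one_x : (1 : PellE R D).x = 1 := rfl
@[simp] lemma one_y : (1 : PellE R D).y = 0 := rfl
@[simp] lemma natCast_x (n : ℕ) : ((n : PellE R D)).x = n := rfl
@[simp] lemma natCast_y (n : ℕ) : ((n : PellE R D)).y = 0 := rfl
@[simp] lemma intCast_x (n : ℤ) : ((n : PellE R D)).x = n := rfl
@[simp] lemma intCast_y (n : ℤ) : ((n : PellE R D)).y = 0 := rfl

instance : CommRing (PellE R D) where
  add_assoc a b c := by ext <;> simp <;> ring
  zero_add a := by ext <;> simp
  add_zero a := by ext <;> simp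
  add_comm a b := by ext <;> simp <;> ring
  mul_comm a b := by ext <;> simp <;> ring
  mul_assoc a b c := by ext <;> simp <;> ring
  one_mul a := by ext <;> simp
  mul_one a := by ext <;> simp
  left_distrib a b c := by ext <;> simp <;> ring
  right_distrib a b c := by ext <;> simp <;> ring
  zero_mul a := by ext <;> simp
  mul_zero a := by ext <;> simp
  neg_add_cancel a := by ext <;> simp
  natCast_zero := by ext <;> simp
  natCast_succ n := by ext <;> simp
  intCast_ofNat n := by ext <;> simp
  intCast_negSucc n := by ext <;> simp [Int.negSucc_eq]
  nsmul := nsmulRec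
  zsmul := zsmulRec

/-- The scalar embedding `R → R[√D]`. -/
def C : R →+* PellE R D where
  toFun a := ⟨a, 0⟩
  map_one' := by ext <;> simp
  map_mul' a b := by ext <;> simp
  map_zero' := by ext <;> simp
  map_add' a b := by ext <;> simp

@[simp] lemma C_x (a : R) : (C (D := D) a).x = a := rfl
@[simp] lemma C_y (a : R) : (C (D := D) a).y = 0 := rfl

/-- Componentwise base change. -/
def map {S : Type*} [CommRing S] (f : R →+* S) : PellE R D →+* PellE S (f D) where
  toFun a := ⟨f a.x, f a.y⟩
  map_one' := by ext <;> simp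
  map_mul' a b := by ext <;> simp
  map_zero' := by ext <;> simp
  map_add' a b := by ext <;> simp

@[simp] lemma map_x {S : Type*} [CommRing S] (f : R →+* S) (a : PellE R D) :
    (map f a).x = f a.x := rfl
@[simp] lemma map_y {S : Type*} [CommRing S] (f : R →+* S) (a : PellE R D) :
    (map f a).y = f a.y := rfl

end PellE

open PellE in
lemma pellPow_eq_PellE {R : Type*} [CommRing R] (D : R) (P : R × R) (n : ℕ) :
    pellPow D P n = (((⟨P.1, P.2⟩ : PellE R D) ^ n).x, ((⟨P.1, P.2⟩ : PellE R D) ^ n).y) := by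
  induction n with
  | zero => rfl
  | succ n ih => rw [pellPow, ih, pow_succ, mul_comm]; rfl

/-- binomial expansion helper -/
lemma one_add_pow_eq {A : Type*} [CommRing A] (x : A) (n : ℕ) :
    ∃ c : A, (1 + x) ^ n = 1 + n * x + x ^ 2 * c := by
  induction n with
  | zero => exact ⟨0, by simp⟩
  | succ n ih =>
    obtain ⟨c, hc⟩ := ih
    exact ⟨c + n + x * c, by rw [pow_succ, hc]; push_cast; ring⟩

lemma one_add_p_pow {A : Type*} [CommRing A] (p : ℕ) (a : A) (m : ℕ) :
    ∃ b : A, (1 + (p : A) * a) ^ (p ^ m) = 1 + (p : A) ^ (m + 1) * b := by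
  induction m with
  | zero => exact ⟨a, by simp⟩
  | succ m ih =>
    obtain ⟨b, hb⟩ := ih
    obtain ⟨c, hc⟩ := one_add_pow_eq ((p : A) ^ (m + 1) * b) p
    refine ⟨b + (p : A) ^ m * b ^ 2 * c, ?_⟩
    rw [pow_succ, pow_mul, hb, hc]
    ring

/-- Prime case: norm-one elements of `F_p[√D]`, `D` a nonsquare, have order dividing `p+1`. -/
lemma prime_case (p : ℕ) [hp : Fact p.Prime] (hp2 : p ≠ 2) (D : ZMod p)
    (hD : ¬ IsSquare D) (u : PellE (ZMod p) D) (hu : u.x ^ 2 - D * u.y ^ 2 = 1) :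
    u ^ (p + 1) = 1 := by
  obtain ⟨a, b⟩ := u
  simp only at hu
  have hD0 : D ≠ 0 := by rintro rfl; exact hD ⟨0, by ring⟩
  have hDpow : D ^ (p / 2) = -1 := by
    rcases ZMod.pow_div_two_eq_neg_one_or_one p hD0 with h | h
    · exact absurd ((ZMod.euler_criterion p hD0).mpr h) hD
    · exact h
  have hodd : p = 2 * (p / 2) + 1 := by
    rcases hp.out.eq_two_or_odd' with h | h
    · exact absurd h hp2
    · obtain ⟨k, hk⟩ := h; omega
  set t : PellE (ZMod p) D := ⟨0, 1⟩ with ht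
  have ht2 : t ^ 2 = PellE.C D := by ext <;> simp [pow_two, ht]
  have hcharP : CharP (PellE (ZMod p) D) p := by
    constructor
    intro n
    constructor
    · intro h
      have : ((n : ZMod p)) = 0 := congrArg PellE.x h
      exact (ZMod.natCast_eq_zero_iff n p).mp this
    · intro h
      ext
      · simpa using (ZMod.natCast_eq_zero_iff n p).mpr h
      · simp
  haveI := hcharP
  have hu' : (⟨a, b⟩ : PellE (ZMod p) D) = PellE.C a + PellE.C b * t := by
    ext <;> simp [ht]
  have hCpow : ∀ c : ZMod p, (PellE.C (D := D) c) ^ p = PellE.C c := by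
    intro c
    rw [← map_pow, ZMod.pow_card]
  have htp : t ^ p = -t := by
    calc t ^ p = t ^ (2 * (p / 2) + 1) := by rw [← hodd]
    _ = (t ^ 2) ^ (p / 2) * t := by rw [← pow_mul, ← pow_succ]
    _ = PellE.C (D ^ (p / 2)) * t := by rw [ht2, map_pow]
    _ = -t := by rw [hDpow]; ext <;> simp
  have hup : (⟨a, b⟩ : PellE (ZMod p) D) ^ p = PellE.C a - PellE.C b * t := by
    rw [hu', add_pow_char, mul_pow, hCpow, hCpow, htp]
    ring
  calc (⟨a, b⟩ : PellE (ZMod p) D) ^ (p + 1) = (⟨a, b⟩ : PellE (ZMod p) D) ^ p * ⟨a, b⟩ := by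
        rw [pow_succ]
  _ = (PellE.C a - PellE.C b * t) * (PellE.C a + PellE.C b * t) := by rw [hup, hu']
  _ = PellE.C (a ^ 2 - D * b ^ 2) - PellE.C (b ^ 2) * (t ^ 2 - PellE.C D) := by
      rw [map_sub, map_mul, map_pow, map_pow]; ring
  _ = 1 := by rw [ht2, hu]; simp

/-- kernel of reduction `ZMod (p^e) → ZMod p`. -/
lemma ker_cast {p e : ℕ} (hp : 0 < p) (he : 1 ≤ e) (z : ZMod (p ^ e))
    (hz : ZMod.castHom (dvd_pow_self p (by omega : e ≠ 0)) (ZMod p) z = 0) :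
    ∃ w : ZMod (p ^ e), z = (p : ZMod (p ^ e)) * w := by
  haveI : NeZero (p ^ e) := ⟨pow_ne_zero _ hp.ne'⟩
  have h1 : ((z.val : ℕ) : ZMod p) = 0 := by
    rw [ZMod.castHom_apply] at hz
    rwa [ZMod.natCast_val]
  obtain ⟨c, hc⟩ := (ZMod.natCast_eq_zero_iff _ _).mp h1
  refine ⟨(c : ZMod (p ^ e)), ?_⟩
  have h2 : ((z.val : ℕ) : ZMod (p ^ e)) = z := by
    rw [ZMod.natCast_val, ZMod.cast_id]
  rw [← h2, hc]
  push_cast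
  ring

/-- Prime power case. -/
lemma prime_pow_case (p e : ℕ) [hp : Fact p.Prime] (hp2 : p ≠ 2) (he : 1 ≤ e)
    (D : ZMod (p ^ e))
    (hD : ¬ IsSquare (ZMod.castHom (dvd_pow_self p (by omega : e ≠ 0)) (ZMod p) D))
    (u : PellE (ZMod (p ^ e)) D) (hu : u.x ^ 2 - D * u.y ^ 2 = 1) :
    u ^ (p ^ (e - 1) * (p + 1)) = 1 := by
  set f := ZMod.castHom (dvd_pow_self p (by omega : e ≠ 0)) (ZMod p) with hf
  set π := PellE.map (D := D) f with hπ
  have hv1 : (π u) ^ (p + 1) = 1 := by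
    apply prime_case p hp2 _ hD
    have := congrArg f hu
    simpa [hπ] using this
  set w := u ^ (p + 1) with hw
  have hπw : π w = 1 := by rw [hw, map_pow, hv1]
  have hwx : f (w.x - 1) = 0 := by
    have h1 : (π w).x = 1 := by rw [hπw]; rfl
    simp only [hπ, PellE.map_x] at h1
    rw [map_sub, h1, map_one, sub_self]
  have hwy : f w.y = 0 := by
    have h1 : (π w).y = 0 := by rw [hπw]; rfl
    simpa [hπ] using h1
  obtain ⟨a, ha⟩ := ker_cast hp.out.pos he _ hwx
  obtain ⟨b, hb⟩ := ker_cast hp.out.pos he _ hwy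
  have hwab : w = 1 + (p : PellE (ZMod (p ^ e)) D) * (⟨a, b⟩ : PellE (ZMod (p ^ e)) D) := by
    ext
    · simp only [PellE.add_x, PellE.one_x, PellE.mul_x, PellE.natCast_x, PellE.natCast_y]
      linear_combination ha
    · simp only [PellE.add_y, PellE.one_y, PellE.mul_y, PellE.natCast_x, PellE.natCast_y]
      linear_combination hb
  obtain ⟨c, hc⟩ := one_add_p_pow p (⟨a, b⟩ : PellE (ZMod (p ^ e)) D) (e - 1)
  have hpe : ((p : PellE (ZMod (p ^ e)) D)) ^ (e - 1 + 1) = 0 := by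
    have h1 : e - 1 + 1 = e := by omega
    rw [h1, ← Nat.cast_pow]
    ext
    · exact ZMod.natCast_self _
    · rfl
  have hw1 : w ^ (p ^ (e - 1)) = 1 := by rw [hwab, hc, hpe]; ring
  calc u ^ (p ^ (e - 1) * (p + 1)) = (u ^ (p + 1)) ^ (p ^ (e - 1)) := by
        rw [← pow_mul, mul_comm]
  _ = 1 := hw1

lemma pell_crt (r : ℕ) (p e : Fin r → ℕ) (hp : ∀ i, (p i).Prime)
    (hp2 : ∀ i, p i ≠ 2) (hinj : Function.Injective p) (he : ∀ i, 1 ≤ e i)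
    (N : ℕ) (hNdef : N = ∏ i, p i ^ e i)
    (hdvd : ∀ i, p i ^ e i ∣ N) (hdvd' : ∀ i, p i ∣ N)
    (D : ZMod N)
    (hD : ∀ i, ∀ c : ZMod (p i), c ^ 2 ≠ ZMod.castHom (hdvd' i) (ZMod (p i)) D)
    (u : PellE (ZMod N) D) (hunorm : u.x ^ 2 - D * u.y ^ 2 = 1) :
    u ^ (∏ i, p i ^ (e i - 1) * (p i + 1)) = 1 := by
  haveI : NeZero N := ⟨by
    rw [hNdef]; exact (Finset.prod_pos (fun i _ => pow_pos (hp i).pos _)).ne'⟩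
  set M := ∏ i, p i ^ (e i - 1) * (p i + 1) with hM
  -- injectivity of simultaneous reduction
  have hcomp : ∀ z : ZMod N,
      (∀ i, ZMod.castHom (hdvd i) (ZMod (p i ^ e i)) z = 0) → z = 0 := by
    intro z hz
    have hdvdZ : ∀ i : Fin r, (p i : ℤ) ^ e i ∣ (z.val : ℤ) := by
      intro i
      have h0 := hz i
      rw [ZMod.castHom_apply] at h0
      have h1 : ((z.val : ℕ) : ZMod (p i ^ e i)) = 0 := by
        rwa [ZMod.natCast_val]
      have h2 := (ZMod.natCast_eq_zero_iff _ _).mp h1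
      exact_mod_cast Int.natCast_dvd_natCast.mpr h2
    have hpair : Pairwise (Function.onFun IsCoprime fun i : Fin r => (p i : ℤ) ^ e i) := by
      intro i j hij
      have hc : Nat.Coprime (p i ^ e i) (p j ^ e j) :=
        Nat.Coprime.pow (e i) (e j)
          ((Nat.coprime_primes (hp i) (hp j)).mpr (fun h => hij (hinj h)))
      show IsCoprime ((p i : ℤ) ^ e i) ((p j : ℤ) ^ e j)
      exact_mod_cast Nat.isCoprime_iff_coprime.mpr hc
    have hprodZ : (∏ i, (p i : ℤ) ^ e i) ∣ (z.val : ℤ) :=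
      Fintype.prod_dvd_of_coprime hpair hdvdZ
    have hNdvd : N ∣ z.val := by
      have h3 : ((∏ i, p i ^ e i : ℕ) : ℤ) ∣ (z.val : ℤ) := by
        push_cast; exact hprodZ
      have h4 : (∏ i, p i ^ e i) ∣ z.val := by exact_mod_cast h3
      have h5 : N ∣ ∏ i, p i ^ e i := by rw [hNdef]
      exact h5.trans h4
    have hval : z.val = 0 := Nat.eq_zero_of_dvd_of_lt hNdvd (ZMod.val_lt z)
    have h4 : ((z.val : ℕ) : ZMod N) = z := by rw [ZMod.natCast_val, ZMod.cast_id]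
    rw [← h4, hval, Nat.cast_zero]
  -- reduction mod each prime power kills u ^ M - 1
  have hred : ∀ i, ZMod.castHom (hdvd i) (ZMod (p i ^ e i)) ((u ^ M).x - 1) = 0 ∧
      ZMod.castHom (hdvd i) (ZMod (p i ^ e i)) ((u ^ M).y) = 0 := by
    intro i
    haveI : Fact (p i).Prime := ⟨hp i⟩
    set fi := ZMod.castHom (hdvd i) (ZMod (p i ^ e i)) with hfi
    set πi := PellE.map (D := D) fi with hπi
    have hDi : ¬ IsSquare (ZMod.castHom
        (dvd_pow_self (p i) (by have := he i; omega : e i ≠ 0)) (ZMod (p i)) (fi D)) := by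
      rintro ⟨c, hc⟩
      refine hD i c ?_
      rw [sq, ← hc]
      have hcomp2 := ZMod.castHom_comp
        (dvd_pow_self (p i) (by have := he i; omega : e i ≠ 0)) (hdvd i)
      calc ZMod.castHom _ (ZMod (p i)) (fi D)
          = ((ZMod.castHom (dvd_pow_self (p i) (by have := he i; omega : e i ≠ 0))
            (ZMod (p i))).comp fi) D := rfl
      _ = _ := by rw [hfi, hcomp2]
    have hnormi : (πi u).x ^ 2 - (fi D) * (πi u).y ^ 2 = 1 := by
      have h5 := congrArg fi hunorm
      simpa [hπi] using h5
    have hui : (πi u) ^ (p i ^ (e i - 1) * (p i + 1)) = 1 :=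
      prime_pow_case (p i) (e i) (hp2 i) (he i) (fi D) hDi (πi u) hnormi
    have hM' : M = (p i ^ (e i - 1) * (p i + 1)) *
        ∏ j ∈ Finset.univ.erase i, p j ^ (e j - 1) * (p j + 1) := by
      rw [hM]
      exact (Finset.mul_prod_erase Finset.univ _ (Finset.mem_univ i)).symm
    have huM : πi (u ^ M) = 1 := by
      rw [map_pow, hM', pow_mul, hui, one_pow]
    constructor
    · have h1 : (πi (u ^ M)).x = 1 := by rw [huM]; rfl
      simp only [hπi, PellE.map_x] at h1
      rw [map_sub, h1, map_one, sub_self]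
    · have h1 : (πi (u ^ M)).y = 0 := by rw [huM]; rfl
      exact h1
  ext
  · have h6 := hcomp ((u ^ M).x - 1) (fun i => (hred i).1)
    have h7 : (u ^ M).x = 1 := by rwa [sub_eq_zero] at h6
    simpa using h7
  · exact hcomp ((u ^ M).y) (fun i => (hred i).2)

/-- Let `p₁, …, p_r` be distinct odd primes, `e₁, …, e_r ≥ 1`, and
`N = ∏ pᵢ^{eᵢ}`. If `D ∈ ℤ/Nℤ` reduces to a non-square modulo every `pᵢ`, then every
point of the Pell conic over `ℤ/Nℤ` satisfies `(x,y)^{⊗Ψ(N)} = (1,0)`, where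
`Ψ(N) = ∏ pᵢ^{eᵢ−1}(pᵢ + 1)`. -/
theorem pellPow_psi_eq_one (r : ℕ) (p e : Fin r → ℕ) (hp : ∀ i, (p i).Prime)
    (hp2 : ∀ i, p i ≠ 2) (hinj : Function.Injective p) (he : ∀ i, 1 ≤ e i)
    (D : ZMod (∏ i, p i ^ e i))
    (hD : ∀ i, ∀ c : ZMod (p i), c ^ 2 ≠
      ZMod.castHom ((dvd_pow_self (p i) (Nat.one_le_iff_ne_zero.mp (he i))).trans
        (Finset.dvd_prod_of_mem (fun j => p j ^ e j) (Finset.mem_univ i))) (ZMod (p i)) D) :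
    ∀ P ∈ pellConic D, pellPow D P (∏ i, p i ^ (e i - 1) * (p i + 1)) = (1, 0) := by
  intro P hP
  have key := pell_crt r p e hp hp2 hinj he _ rfl
    (fun i => Finset.dvd_prod_of_mem (fun j => p j ^ e j) (Finset.mem_univ i))
    (fun i => (dvd_pow_self (p i) (Nat.one_le_iff_ne_zero.mp (he i))).trans
      (Finset.dvd_prod_of_mem (fun j => p j ^ e j) (Finset.mem_univ i)))
    D hD ⟨P.1, P.2⟩ hP
  rw [pellPow_eq_PellE, key]
  rfl
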